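/- Füredi's construction: Let q be a prime power and let c be a positive integer with c < q − 1 and c dividing q − 1. Then there exists a q-uniform hypergraph with exactly (q² − 1)/c vertices and exactly (q² − 1)/c distinct edges such that every two distinct edges intersect in at most c vertices. Concretely: there is a finite type V with |V| = (q² − 1)/c and a Finset E of Finsets of V with |E| = (q² − 1)/c, such that every e ∈ E has |e| = q and |e ∩ e'| ≤ c for all distinct e, e' ∈ E. -/

import Mathlib

open Finset Polynomial

section FurediHelpers

variable {K : Type} [Field K] [Fintype K] [DecidableEq K]

/-- A finset of roots of a nonzero polynomial has at most `natDegree` elements. -/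
lemma furedi_card_le_natDegree {f : K[X]} (hf : f ≠ 0) {s : Finset K}
    (h : ∀ x ∈ s, f.eval x = 0) : s.card ≤ f.natDegree := by
  calc s.card ≤ f.roots.toFinset.card := by
        apply Finset.card_le_card
        intro x hx
        rw [Multiset.mem_toFinset, mem_roots hf]
        exact h x hx
    _ ≤ Multiset.card f.roots := f.roots.toFinset_card_le
    _ ≤ f.natDegree := f.card_roots'

lemma furedi_fiber_card (p m : ℕ) [Fact p.Prime] [CharP K p] (θ : K) :
    (univ.filter fun x : K => x ^ p ^ m - x = θ ^ p ^ m - θ).card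
      = (univ.filter fun x : K => x ^ p ^ m = x).card := by
  apply Finset.card_bij (fun (y : K) _ => y - θ)
  · intro y hy
    simp only [mem_filter, mem_univ, true_and] at *
    rw [sub_pow_char_pow]
    linear_combination hy
  · intro a _ b _ hab
    exact sub_left_injective hab
  · intro k hk
    simp only [mem_filter, mem_univ, true_and] at hk
    refine ⟨k + θ, ?_, by ring⟩
    simp only [mem_filter, mem_univ, true_and]
    rw [add_pow_char_pow, hk]
    ring

lemma furedi_ker_card (p m : ℕ) [Fact p.Prime] [CharP K p] (hm : m ≠ 0)
    (hK : Fintype.card K = (p ^ m) ^ 2) :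
    (univ.filter fun x : K => x ^ p ^ m = x).card = p ^ m := by
  set q := p ^ m with hqdef
  have hp2 : 2 ≤ p := (Fact.out : p.Prime).two_le
  have hq1 : 1 < q := by
    calc 1 < 2 := one_lt_two
    _ ≤ p := hp2
    _ ≤ p ^ m := Nat.le_self_pow hm p
  have hq0 : q ≠ 0 := by omega
  have hdeg1 : ((X : K[X]) ^ q - X).natDegree = q := by
    rw [natDegree_sub_eq_left_of_natDegree_lt] <;>
      simp [natDegree_X_pow, natDegree_X, hq1]
  have hne1 : ((X : K[X]) ^ q - X) ≠ 0 := by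
    intro h
    rw [h, natDegree_zero] at hdeg1
    omega
  have hdeg2 : ((X : K[X]) ^ q + X).natDegree = q := by
    rw [natDegree_add_eq_left_of_natDegree_lt] <;>
      simp [natDegree_X_pow, natDegree_X, hq1]
  have hne2 : ((X : K[X]) ^ q + X) ≠ 0 := by
    intro h
    rw [h, natDegree_zero] at hdeg2
    omega
  have hker_le : (univ.filter fun x : K => x ^ q = x).card ≤ q := by
    have := furedi_card_le_natDegree (f := (X : K[X]) ^ q - X) hne1
      (s := univ.filter fun x : K => x ^ q = x) ?_
    · rwa [hdeg1] at this
    · intro x hx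
      simp only [mem_filter, mem_univ, true_and] at hx
      simp [hx]
  set rng := univ.image (fun x : K => x ^ q - x) with hrng
  have hxqq : ∀ x : K, (x ^ q) ^ q = x := by
    intro x
    rw [← pow_mul, ← pow_two q, ← hK, FiniteField.pow_card]
  have hrng_le : rng.card ≤ q := by
    have := furedi_card_le_natDegree (f := (X : K[X]) ^ q + X) hne2 (s := rng) ?_
    · rwa [hdeg2] at this
    · intro y hy
      obtain ⟨x, _, rfl⟩ := mem_image.mp hy
      simp only [eval_add, eval_pow, eval_X]
      rw [sub_pow_char_pow, hxqq]
      ring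
  have hsum : Fintype.card K = rng.card * (univ.filter fun x : K => x ^ q = x).card := by
    rw [← Finset.card_univ, Finset.card_eq_sum_card_image (fun x : K => x ^ q - x) univ,
      Finset.sum_congr rfl (fun d hd => ?_), Finset.sum_const, smul_eq_mul]
    obtain ⟨θ, _, rfl⟩ := mem_image.mp hd
    exact furedi_fiber_card p m θ
  have hprod : rng.card * (univ.filter fun x : K => x ^ q = x).card = q * q := by
    rw [← hsum, hK, pow_two]
  have hge : q ≤ (univ.filter fun x : K => x ^ q = x).card := by
    by_contra hlt
    push_neg at hlt
    have : rng.card * (univ.filter fun x : K => x ^ q = x).card < q * q :=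
      Nat.mul_lt_mul_of_le_of_lt hrng_le hlt (by omega)
    omega
  omega

end FurediHelpers

theorem furedi_aux (p m c : ℕ) [hpp : Fact p.Prime] (hm : m ≠ 0)
    (K : Type) [Field K] [Fintype K] [DecidableEq K] [CharP K p]
    (hK : Fintype.card K = (p ^ m) ^ 2)
    (hc : 0 < c) (hlt : c < p ^ m - 1) (hdvd : c ∣ p ^ m - 1) :
    ∃ (V : Type) (_ : Fintype V) (_ : DecidableEq V) (E : Finset (Finset V)),
      Fintype.card V = ((p ^ m) ^ 2 - 1) / c ∧
      E.card = ((p ^ m) ^ 2 - 1) / c ∧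
      (∀ e ∈ E, e.card = p ^ m) ∧
      (∀ e ∈ E, ∀ e' ∈ E, e ≠ e' → (e ∩ e').card ≤ c) := by
  classical
  set q := p ^ m with hqdef
  have hp2 : 2 ≤ p := (Fact.out : p.Prime).two_le
  have hq3 : 3 ≤ q := by omega
  have hq0 : q ≠ 0 := by omega
  have hker : (univ.filter fun x : K => x ^ q = x).card = q :=
    furedi_ker_card p m hm hK
  -- choose θ outside the kernel
  have hθex : ∃ θ : K, θ ^ q ≠ θ := by
    by_contra h
    push_neg at h
    have huniv : (univ : Finset K) = univ.filter fun x : K => x ^ q = x := by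
      ext x; simp [h x]
    rw [← huniv, Finset.card_univ, hK] at hker
    nlinarith
  obtain ⟨θ, hθ⟩ := hθex
  set d : K := θ ^ q - θ with hd
  have hd0 : d ≠ 0 := sub_ne_zero.mpr hθ
  -- the subgroup H of c-th roots of unity
  set H : Subgroup Kˣ :=
    { carrier := {x : Kˣ | x ^ c = 1}
      mul_mem' := by
        intro a b ha hb
        simp only [Set.mem_setOf_eq] at *
        rw [mul_pow, ha, hb, mul_one]
      one_mem' := one_pow c
      inv_mem' := by
        intro a ha
        simp only [Set.mem_setOf_eq] at *
        rw [inv_pow, ha, inv_one] } with hHdef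
  have memH : ∀ x : Kˣ, x ∈ H ↔ x ^ c = 1 := fun x => Iff.rfl
  have hcardKu : Fintype.card Kˣ = q ^ 2 - 1 := by
    rw [Fintype.card_units, hK]
  have hq21 : q ^ 2 - 1 = (q + 1) * (q - 1) := by
    have := Nat.sq_sub_sq q 1
    simpa using this
  have hcdvd : c ∣ q ^ 2 - 1 := by
    rw [hq21]
    exact Dvd.dvd.mul_left hdvd (q + 1)
  have hHfilter : Nat.card H = (univ.filter fun x : Kˣ => x ^ c = 1).card := by
    rw [Nat.card_eq_fintype_card,
      Fintype.card_congr (Equiv.subtypeEquivRight (fun x => memH x))]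
    exact Fintype.card_subtype _
  -- card H = c
  have hHcard : Nat.card H = c := by
    obtain ⟨g, hg⟩ := IsCyclic.exists_generator (α := Kˣ)
    have horder : orderOf g = q ^ 2 - 1 := by
      rw [orderOf_eq_card_of_forall_mem_zpowers hg, Nat.card_eq_fintype_card, hcardKu]
    set a := g ^ ((q ^ 2 - 1) / c) with ha
    have hq210 : 0 < q ^ 2 - 1 := by nlinarith
    have horda : orderOf a = c := by
      rw [ha, orderOf_pow, horder, Nat.gcd_eq_right (Nat.div_dvd_of_dvd hcdvd),
        Nat.div_div_self hcdvd (by omega)]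
    have haH : a ∈ H := by
      rw [memH, ha, ← pow_mul, Nat.div_mul_cancel hcdvd, ← horder, pow_orderOf_eq_one]
    have hle : c ≤ Nat.card H := by
      calc c = orderOf a := horda.symm
      _ = Nat.card (Subgroup.zpowers a) := (Nat.card_zpowers a).symm
      _ ≤ Nat.card H := Subgroup.card_le_of_le ((Subgroup.zpowers_le).mpr haH)
    have hge : Nat.card H ≤ c := by
      rw [hHfilter]
      have h2 := furedi_card_le_natDegree (f := (X : K[X]) ^ c - C 1)
        (X_pow_sub_C_ne_zero hc 1)
        (s := (univ.filter fun x : Kˣ => x ^ c = 1).image (fun x : Kˣ => (x : K))) ?_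
      · rw [Finset.card_image_of_injective _ (fun _ _ h => Units.ext h), natDegree_X_pow_sub_C] at h2
        exact h2
      · intro x hx
        obtain ⟨u, hu, rfl⟩ := mem_image.mp hx
        simp only [mem_filter, mem_univ, true_and] at hu
        simp only [eval_sub, eval_pow, eval_X, eval_C]
        rw [← Units.val_pow_eq_pow_val, hu, Units.val_one, sub_self]
    omega
  -- the vertex type
  set V := Kˣ ⧸ H with hV
  haveI : Fintype V := Fintype.ofFinite V
  have hcardV : Fintype.card V = (q ^ 2 - 1) / c := by
    have h1 := Subgroup.card_eq_card_quotient_mul_card_subgroup H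
    rw [hHcard, Nat.card_eq_fintype_card, Nat.card_eq_fintype_card, hcardKu] at h1
    rw [h1, Nat.mul_div_cancel _ hc]
  -- the line L
  set L : Finset Kˣ := univ.filter (fun x : Kˣ => (x : K) ^ q - x = d) with hLdef
  have hmemL : ∀ x : Kˣ, x ∈ L ↔ (x : K) ^ q - x = d := by
    intro x
    simp [hLdef]
  have hLcard : L.card = q := by
    have hbij : L.card = (univ.filter fun x : K => x ^ q - x = d).card := by
      apply Finset.card_bij (fun (x : Kˣ) _ => (x : K))
      · intro x hx
        rw [hmemL] at hx
        simp only [mem_filter, mem_univ, true_and]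
        exact hx
      · intro x _ y _ hxy
        exact Units.ext hxy
      · intro y hy
        simp only [mem_filter, mem_univ, true_and] at hy
        have hy0 : y ≠ 0 := by
          intro h
          rw [h, zero_pow hq0, sub_zero] at hy
          exact hd0 hy.symm
        refine ⟨Units.mk0 y hy0, ?_, rfl⟩
        rw [hmemL]
        simpa using hy
    rw [hbij, hd, furedi_fiber_card p m θ, hker]
  -- elements of H are fixed by x ↦ x^q
  have hHF : ∀ h : Kˣ, h ∈ H → ((h : Kˣ) : K) ^ q = h := by
    intro h hh
    rw [memH] at hh
    obtain ⟨t, ht⟩ := hdvd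
    have h1 : h ^ (q - 1) = 1 := by rw [ht, pow_mul, hh, one_pow]
    have h2 : h ^ q = h := by
      have hq1 : q = (q - 1) + 1 := by omega
      rw [hq1, pow_succ, h1, one_mul]
    rw [← Units.val_pow_eq_pow_val, h2]
  -- freeness: H acts freely on L
  have hfree : ∀ h : Kˣ, h ∈ H → ∀ x : Kˣ, x ∈ L → h * x ∈ L → h = 1 := by
    intro h hh x hx hhx
    rw [hmemL] at hx hhx
    rw [Units.val_mul, mul_pow, hHF h hh] at hhx
    have hzero : ((h : K) - 1) * d = 0 := by
      linear_combination hhx - (h : K) * hx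
    have h1 : (h : K) = 1 := by
      rcases mul_eq_zero.mp hzero with h' | h'
      · exact sub_eq_zero.mp h'
      · exact absurd h' hd0
    exact Units.ext h1
  -- the two-point lemma
  have htwo : ∀ w a b : K, a ≠ 0 → b ≠ 0 → a ≠ b →
      a ^ q - a = d → b ^ q - b = d →
      (w * a) ^ q - w * a = d → (w * b) ^ q - w * b = d → w = 1 := by
    intro w a b ha hb hab hA hB hWA hWB
    rw [mul_pow] at hWA hWB
    by_contra hw
    have h1 : (w ^ q - 1) * a ^ q = (w - 1) * a := by linear_combination hWA - hA
    have h2 : (w ^ q - 1) * b ^ q = (w - 1) * b := by linear_combination hWB - hB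
    by_cases hwq : w ^ q = 1
    · rw [hwq, sub_self, zero_mul] at h1
      rcases mul_eq_zero.mp h1.symm with h' | h'
      · exact hw (sub_eq_zero.mp h')
      · exact ha h'
    · have hwq0 : w ^ q - 1 ≠ 0 := sub_ne_zero.mpr hwq
      have h3 : a ^ q * b = b ^ q * a := by
        have h4 : (w ^ q - 1) * (a ^ q * b) = (w ^ q - 1) * (b ^ q * a) := by
          linear_combination b * h1 - a * h2
        exact mul_left_cancel₀ hwq0 h4
      have h6 : d * b = d * a := by linear_combination h3 + a * hB - b * hA
      exact hab (mul_left_cancel₀ hd0 h6).symm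
  -- the edges
  set e : Kˣ → Finset V := fun g => L.image (fun x => (QuotientGroup.mk (g * x) : V))
    with hedef
  have hecard : ∀ g : Kˣ, (e g).card = q := by
    intro g
    rw [hedef]
    simp only
    rw [Finset.card_image_of_injOn, hLcard]
    intro x hx y hy hxy
    rw [QuotientGroup.eq] at hxy
    have hmem : x⁻¹ * y ∈ H := by
      have hrw : (g * x)⁻¹ * (g * y) = x⁻¹ * y := by group
      rwa [hrw] at hxy
    have hin : (x⁻¹ * y) * x ∈ L := by
      have hrw : (x⁻¹ * y) * x = y := by
        rw [mul_assoc, mul_comm y x, inv_mul_cancel_left]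
      rw [hrw]
      exact hy
    have h1 := hfree (x⁻¹ * y) hmem x hx hin
    exact inv_mul_eq_one.mp h1
  have hsmul : ∀ g h : Kˣ, h ∈ H → e (g * h) = e g := by
    intro g h hh
    rw [hedef]
    apply Finset.image_congr
    intro x _
    simp only
    have hrw : g * h * x = (g * x) * h := mul_right_comm g h x
    rw [hrw, QuotientGroup.eq]
    have hrw2 : (g * x * h)⁻¹ * (g * x) = h⁻¹ := by group
    rw [hrw2]
    exact H.inv_mem hh
  -- the intersection bound
  have hinter : ∀ g g' : Kˣ, g'⁻¹ * g ∉ H → (e g ∩ e g').card ≤ c := by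
    intro g g' hno
    have hsub : ∀ v ∈ e g ∩ e g', ∃ xy : Kˣ × Kˣ, xy.1 ∈ L ∧ xy.2 ∈ L ∧
        (QuotientGroup.mk (g * xy.1) : V) = v ∧ (QuotientGroup.mk (g' * xy.2) : V) = v := by
      intro v hv
      rw [Finset.mem_inter] at hv
      obtain ⟨x, hx, hxv⟩ := Finset.mem_image.mp hv.1
      obtain ⟨y, hy, hyv⟩ := Finset.mem_image.mp hv.2
      exact ⟨⟨x, y⟩, hx, hy, hxv, hyv⟩
    set F : V → Kˣ := fun v =>
      if hv : v ∈ e g ∩ e g' then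
        (g' * (Classical.choose (hsub v hv)).2)⁻¹ * (g * (Classical.choose (hsub v hv)).1)
      else 1 with hF
    have hFmem : ∀ v, ∀ hv : v ∈ e g ∩ e g', F v ∈ H := by
      intro v hv
      obtain ⟨hx, hy, hxv, hyv⟩ := Classical.choose_spec (hsub v hv)
      rw [hF]
      simp only [dif_pos hv]
      rw [← QuotientGroup.eq, hyv, hxv]
    have hFinj : Set.InjOn F ↑(e g ∩ e g') := by
      intro v₁ hv₁' v₂ hv₂' hFv
      have hv₁ : v₁ ∈ e g ∩ e g' := by simpa using hv₁'
      have hv₂ : v₂ ∈ e g ∩ e g' := by simpa using hv₂'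
      by_contra hne
      obtain ⟨hx₁, hy₁, hxv₁, hyv₁⟩ := Classical.choose_spec (hsub v₁ hv₁)
      obtain ⟨hx₂, hy₂, hxv₂, hyv₂⟩ := Classical.choose_spec (hsub v₂ hv₂)
      set x₁ := (Classical.choose (hsub v₁ hv₁)).1 with hx₁def
      set y₁ := (Classical.choose (hsub v₁ hv₁)).2 with hy₁def
      set x₂ := (Classical.choose (hsub v₂ hv₂)).1 with hx₂def
      set y₂ := (Classical.choose (hsub v₂ hv₂)).2 with hy₂def
      have hFv₁ : F v₁ = (g' * y₁)⁻¹ * (g * x₁) := by rw [hF]; simp only [dif_pos hv₁]; rfl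
      have hFv₂ : F v₂ = (g' * y₂)⁻¹ * (g * x₂) := by rw [hF]; simp only [dif_pos hv₂]; rfl
      obtain ⟨h, hh⟩ : ∃ h : Kˣ, h = F v₁ := ⟨F v₁, rfl⟩
      have hhH : h ∈ H := hh ▸ hFmem v₁ hv₁
      have heq1 : g' * y₁ * h = g * x₁ := by rw [hh, hFv₁, mul_inv_cancel_left]
      have heq2 : g' * y₂ * h = g * x₂ := by rw [hh, hFv, hFv₂, mul_inv_cancel_left]
      have H1 : (g' : K) * y₁ * h = (g : K) * x₁ := by
        have := congrArg (fun z : Kˣ => (z : K)) heq1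
        push_cast at this
        exact this
      have H2 : (g' : K) * y₂ * h = (g : K) * x₂ := by
        have := congrArg (fun z : Kˣ => (z : K)) heq2
        push_cast at this
        exact this
      set wK : K := (g : K) * ((h : Kˣ) : K)⁻¹ * ((g' : Kˣ) : K)⁻¹ with hwK
      have hx₁x₂ : (x₁ : K) ≠ (x₂ : K) := by
        intro hcon
        have : x₁ = x₂ := Units.ext hcon
        apply hne
        rw [← hxv₁, ← hxv₂, this]
      have hy1w : (y₁ : K) = wK * x₁ := by
        rw [hwK]
        field_simp
        linear_combination H1
      have hy2w : (y₂ : K) = wK * x₂ := by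
        rw [hwK]
        field_simp
        linear_combination H2
      have hwone : wK = 1 := by
        apply htwo wK (x₁ : K) (x₂ : K) (Units.ne_zero x₁) (Units.ne_zero x₂) hx₁x₂
        · exact (hmemL x₁).mp hx₁
        · exact (hmemL x₂).mp hx₂
        · rw [← hy1w]; exact (hmemL y₁).mp hy₁
        · rw [← hy2w]; exact (hmemL y₂).mp hy₂
      -- from wK = 1 we get g'⁻¹ * g = h ∈ H, contradiction
      apply hno
      have hval : ((g'⁻¹ * g : Kˣ) : K) = ((h : Kˣ) : K) := by
        push_cast
        rw [hwK] at hwone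
        field_simp at hwone ⊢
        linear_combination hwone
      have : g'⁻¹ * g = h := Units.ext hval
      rw [this]
      exact hhH
    calc (e g ∩ e g').card ≤ (univ.filter fun x : Kˣ => x ^ c = 1).card := by
          apply Finset.card_le_card_of_injOn F ?_ hFinj
          intro v hv
          simp only [Finset.mem_coe, mem_filter, mem_univ, true_and] at hv ⊢
          exact (memH _).mp (hFmem v hv)
    _ = c := by rw [← hHfilter, hHcard]
  -- edges are distinct modulo H
  have hEinj : ∀ g g' : Kˣ, e g = e g' → g'⁻¹ * g ∈ H := by
    intro g g' hEq
    by_contra hno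
    have h1 := hinter g g' hno
    rw [hEq, Finset.inter_self, hecard g'] at h1
    omega
  set E : Finset (Finset V) := univ.image e with hE
  have hEcard : E.card = (q ^ 2 - 1) / c := by
    rw [← hcardV, hE]
    have hcong : ∀ g g' : Kˣ, (QuotientGroup.mk g : V) = QuotientGroup.mk g' → e g = e g' := by
      intro g g' hgg
      rw [QuotientGroup.eq] at hgg
      calc e g = e (g * (g⁻¹ * g')) := (hsmul g _ hgg).symm
      _ = e g' := by rw [mul_inv_cancel_left]
    set ebar : V → Finset V := fun v => e (Quotient.out v) with hebar
    have hcomp : ∀ g : Kˣ, ebar (QuotientGroup.mk g) = e g := by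
      intro g
      exact hcong _ _ (QuotientGroup.out_eq' _)
    have h1 : univ.image e = univ.image ebar := by
      apply Finset.Subset.antisymm
      · intro s hs
        obtain ⟨g, _, rfl⟩ := mem_image.mp hs
        exact mem_image.mpr ⟨QuotientGroup.mk g, mem_univ _, hcomp g⟩
      · intro s hs
        obtain ⟨v, _, rfl⟩ := mem_image.mp hs
        obtain ⟨g, rfl⟩ := QuotientGroup.mk_surjective v
        exact mem_image.mpr ⟨g, mem_univ _, (hcomp g).symm⟩
    have hinj : Function.Injective ebar := by
      intro v₁ v₂ hv
      obtain ⟨g₁, rfl⟩ := QuotientGroup.mk_surjective v₁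
      obtain ⟨g₂, rfl⟩ := QuotientGroup.mk_surjective v₂
      rw [hcomp, hcomp] at hv
      rw [QuotientGroup.eq]
      have h2 := H.inv_mem (hEinj g₁ g₂ hv)
      simpa [mul_inv_rev] using h2
    rw [h1, Finset.card_image_of_injective _ hinj, Finset.card_univ]
  refine ⟨V, inferInstance, inferInstance, E, hcardV, hEcard, ?_, ?_⟩
  · intro s hs
    obtain ⟨g, _, rfl⟩ := mem_image.mp hs
    exact hecard g
  · intro s hs t ht hst
    obtain ⟨g, _, rfl⟩ := mem_image.mp hs
    obtain ⟨g', _, rfl⟩ := mem_image.mp ht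
    apply hinter
    intro hmem
    apply hst
    calc e g = e (g' * (g'⁻¹ * g)) := by rw [mul_inv_cancel_left]
    _ = e g' := hsmul g' _ hmem

/-- Füredi's construction: if `q` is a prime power and `c` is a positive integer
with `c < q − 1` and `c ∣ q − 1`, then there exists a `q`-uniform hypergraph with
`(q² − 1)/c` vertices and `(q² − 1)/c` edges such that every two distinct edges
intersect in at most `c` vertices. -/
theorem furedi_construction (q c : ℕ)
    (hq : IsPrimePow q) (hc : 0 < c) (hlt : c < q - 1) (hdvd : c ∣ q - 1) :
    ∃ (V : Type) (_ : Fintype V) (_ : DecidableEq V) (E : Finset (Finset V)),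
      Fintype.card V = (q ^ 2 - 1) / c ∧
      E.card = (q ^ 2 - 1) / c ∧
      (∀ e ∈ E, e.card = q) ∧
      (∀ e ∈ E, ∀ e' ∈ E, e ≠ e' → (e ∩ e').card ≤ c) := by
  obtain ⟨p, m, hp, hm, rfl⟩ := hq
  haveI : Fact p.Prime := ⟨hp.nat_prime⟩
  have hm0 : m ≠ 0 := by omega
  have h2m : 2 * m ≠ 0 := by omega
  let K := GaloisField p (2 * m)
  haveI : Fintype K := Fintype.ofFinite K
  haveI : DecidableEq K := Classical.decEq K
  have hK : Fintype.card K = (p ^ m) ^ 2 := by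
    have h1 := GaloisField.card p (2 * m) h2m
    rw [Nat.card_eq_fintype_card] at h1
    rw [h1, ← pow_mul, mul_comm]
  exact furedi_aux p m c hm0 K hK hc hlt hdvd
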